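/- If V : {0,...,N_b} × {0,...,N_e} → ℝ is submodular in (b,e), then for any independent non-negative integer-valued random variables l and e_H, the function (b̃,ẽ) ↦ E_{l,e_H}[V(min(b̃+l, N_b), min(ẽ+e_H, N_e))] is submodular in (b̃,ẽ). -/
import Mathlib


/-- Independent truncated random shifts in each coordinate
preserve submodularity: if `V` is submodular on `{0,...,N_b} × {0,...,N_e}`,
then `(b̃,ẽ) ↦ E_{l,e_H}[V(min(b̃+l,N_b), min(ẽ+e_H,N_e))]` is submodular. -/
theorem truncated_shifts_preserve_submodularity
    (Nb Ne : ℕ) (V : ℤ → ℤ → ℝ)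
    (hV : ∀ bm bp em ep : ℤ, 0 ≤ bm → bm ≤ bp → bp ≤ Nb →
      0 ≤ em → em ≤ ep → ep ≤ Ne →
      V bp ep - V bp em ≤ V bm ep - V bm em)
    (sl seH : Finset ℤ) (pl peH : ℤ → ℝ)
    (hpl : ∀ l, 0 ≤ pl l) (hpeH : ∀ x, 0 ≤ peH x)
    (hsl : ∀ l ∈ sl, 0 ≤ l) (hseH : ∀ x ∈ seH, 0 ≤ x)
    (hplsum : ∑ l ∈ sl, pl l = 1) (hpeHsum : ∑ x ∈ seH, peH x = 1)
    (W : ℤ → ℤ → ℝ)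
    (hW : ∀ b e : ℤ, W b e = ∑ l ∈ sl, ∑ x ∈ seH,
      pl l * peH x * V (min (b + l) (Nb : ℤ)) (min (e + x) (Ne : ℤ))) :
    ∀ bm bp em ep : ℤ, 0 ≤ bm → bm ≤ bp → 0 ≤ em → em ≤ ep →
      W bp ep - W bp em ≤ W bm ep - W bm em := by
  intro bm bp em ep hbm hbmp hem hemp
  simp only [hW, ← Finset.sum_sub_distrib]
  apply Finset.sum_le_sum
  intro l hl
  apply Finset.sum_le_sum
  intro x hx
  have hl0 := hsl l hl
  have hx0 := hseH x hx
  have key := hV (min (bm + l) (Nb : ℤ)) (min (bp + l) (Nb : ℤ))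
    (min (em + x) (Ne : ℤ)) (min (ep + x) (Ne : ℤ))
    (le_min (by linarith) (by positivity))
    (min_le_min (by linarith) le_rfl) (min_le_right _ _)
    (le_min (by linarith) (by positivity))
    (min_le_min (by linarith) le_rfl) (min_le_right _ _)
  have hnn : (0:ℝ) ≤ pl l * peH x := mul_nonneg (hpl l) (hpeH x)
  nlinarith [mul_le_mul_of_nonneg_left key hnn]
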